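/- Let d ≥ 3 and D ≥ 3 be integers and let ρ ∈ [0,1) be arbitrary. Then there exist N ∈ ℕ, a matrix A ∈ ℝ^{N×d} and y ∈ ℝ^N such that: (1) the problem min{‖x‖₁ : Ax = y} has a unique minimizer g* whose associated null space constant equals ρ (with associated constant ρ̃); and (2) denoting for each α > 0 by x^∞(α) the unique minimizer of D_{Q^D_α}(x,0) over {x : Ax = y}, one has lim_{α↓0} ‖x^∞(α) − g*‖₁ / (α·|S^c|·(1+ρ̃)) = h_D(ρ) and lim_{α↓0} ‖x^∞(α)_{S^c} − g*_{S^c}‖_∞ / α = h_D(ρ). -/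

import Mathlib

open scoped BigOperators

noncomputable section

/-- The ℓ¹-norm of a vector in ℝ^d. -/
def l1 {d : ℕ} (x : Fin d → ℝ) : ℝ := ∑ i, |x i|

/-- The support of a vector, as a finset of indices. -/
def suppF {d : ℕ} (g : Fin d → ℝ) : Finset (Fin d) :=
  Finset.univ.filter (fun i => g i ≠ 0)

/-- The set of quotients whose supremum defines the null space constant ρ. -/
def rhoSet {N d : ℕ} (A : Matrix (Fin N) (Fin d) ℝ) (g : Fin d → ℝ) : Set ℝ :=
  { r | ∃ n : Fin d → ℝ, A.mulVec n = 0 ∧ n ≠ 0 ∧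
      r = (-∑ i ∈ suppF g, Real.sign (g i) * n i) / ∑ i ∈ (suppF g)ᶜ, |n i| }

/-- The null space constant ρ. -/
def rho {N d : ℕ} (A : Matrix (Fin N) (Fin d) ℝ) (g : Fin d → ℝ) : ℝ :=
  sSup (rhoSet A g)

/-- The set of quotients whose supremum defines the null space constant ρ⁻. -/
def rhoMinusSet {N d : ℕ} (A : Matrix (Fin N) (Fin d) ℝ) (g : Fin d → ℝ) : Set ℝ :=
  { r | ∃ n : Fin d → ℝ, A.mulVec n = 0 ∧ n ≠ 0 ∧
      r = (∑ i ∈ (suppF g).filter (fun i => Real.sign (g i) * n i < 0), |n i|) /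
          ∑ i ∈ (suppF g)ᶜ, |n i| }

/-- The null space constant ρ⁻. -/
def rhoMinus {N d : ℕ} (A : Matrix (Fin N) (Fin d) ℝ) (g : Fin d → ℝ) : ℝ :=
  sSup (rhoMinusSet A g)

/-- The set of quotients whose supremum defines the null space constant ρ̃. -/
def rhoTildeSet {N d : ℕ} (A : Matrix (Fin N) (Fin d) ℝ) (g : Fin d → ℝ) : Set ℝ :=
  { r | ∃ n : Fin d → ℝ, A.mulVec n = 0 ∧ n ≠ 0 ∧
      r = (∑ i ∈ suppF g, |n i|) / ∑ i ∈ (suppF g)ᶜ, |n i| }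

/-- The null space constant ρ̃. -/
def rhoTilde {N d : ℕ} (A : Matrix (Fin N) (Fin d) ℝ) (g : Fin d → ℝ) : ℝ :=
  sSup (rhoTildeSet A g)

/-- min_{i ∈ S} |g i|, where S = supp g. -/
def minS {d : ℕ} (g : Fin d → ℝ) : ℝ := sInf { r | ∃ i ∈ suppF g, r = |g i| }

/-- max_{i ∈ S} |g i|, where S = supp g. -/
def maxS {d : ℕ} (g : Fin d → ℝ) : ℝ := sSup { r | ∃ i ∈ suppF g, r = |g i| }

/-- The condition number κ* of g. -/
def kappa {d : ℕ} (g : Fin d → ℝ) : ℝ := maxS g / minS g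

/-- The ℓ∞-norm of the restriction of a vector to a set T of indices. -/
def linftyOn {d : ℕ} (T : Finset (Fin d)) (v : Fin d → ℝ) : ℝ :=
  sSup { r | ∃ i ∈ T, r = |v i| }

/-- The ℓ∞-norm of a vector. -/
def linfty {d : ℕ} (v : Fin d → ℝ) : ℝ := sSup { r | ∃ i : Fin d, r = |v i| }

/-- The function h_D(z) = (1-z)^{-D/(D-2)} - (1+z)^{-D/(D-2)}; on (-1,1) it is a strictly
increasing bijection onto ℝ. -/
def hDfun (D : ℕ) (z : ℝ) : ℝ :=
  (1 - z) ^ (-(D : ℝ) / ((D : ℝ) - 2)) - (1 + z) ^ (-(D : ℝ) / ((D : ℝ) - 2))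

/-- The inverse h_D^{-1} : ℝ → (-1,1) of h_D restricted to (-1,1). -/
def hDInv (D : ℕ) (u : ℝ) : ℝ :=
  haveI : Nonempty (Set.Ioo (-1 : ℝ) 1) := ⟨⟨0, by norm_num [Set.mem_Ioo]⟩⟩
  (Function.invFun (fun z : Set.Ioo (-1 : ℝ) 1 => hDfun D z.1) u).1

/-- q_D(u) = ∫₀ᵘ h_D^{-1}(v) dv. -/
def qDfun (D : ℕ) (u : ℝ) : ℝ := ∫ v in (0:ℝ)..u, hDInv D v

/-- The deep potential Q^D_α. -/
def Qpot {d : ℕ} (D : ℕ) (α : ℝ) (z : Fin d → ℝ) : ℝ :=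
  ∑ i, α * qDfun D (z i / α)

/-- The Bregman divergence of the deep potential Q^D_α; its gradient at q has entries
`h_D^{-1}(q i / α)`. -/
def DQ {d : ℕ} (D : ℕ) (α : ℝ) (p q : Fin d → ℝ) : ℝ :=
  Qpot D α p - Qpot D α q - ∑ i, hDInv D (q i / α) * (p i - q i)

section PartA

variable {D : ℕ} (hD3 : 3 ≤ D)

lemma expo_le (hD3 : 3 ≤ D) : -(D : ℝ) / ((D : ℝ) - 2) ≤ -1 := by
  have h1 : (3:ℝ) ≤ (D:ℝ) := by exact_mod_cast hD3
  rw [div_le_iff₀ (by linarith)]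
  linarith

lemma expo_neg (hD3 : 3 ≤ D) : -(D : ℝ) / ((D : ℝ) - 2) < 0 :=
  lt_of_le_of_lt (expo_le hD3) (by norm_num)

lemma hD_strictMonoOn (hD3 : 3 ≤ D) : StrictMonoOn (hDfun D) (Set.Ioo (-1 : ℝ) 1) := by
  intro z1 h1 z2 h2 hlt
  obtain ⟨h1a, h1b⟩ := h1
  obtain ⟨h2a, h2b⟩ := h2
  have he := expo_neg hD3
  have A : (1 - z1) ^ (-(D : ℝ) / ((D : ℝ) - 2)) < (1 - z2) ^ (-(D : ℝ) / ((D : ℝ) - 2)) :=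
    Real.rpow_lt_rpow_of_neg (by linarith) (by linarith) he
  have B : (1 + z2) ^ (-(D : ℝ) / ((D : ℝ) - 2)) < (1 + z1) ^ (-(D : ℝ) / ((D : ℝ) - 2)) :=
    Real.rpow_lt_rpow_of_neg (by linarith) (by linarith) he
  unfold hDfun
  linarith

lemma hDfun_zero (D : ℕ) : hDfun D 0 = 0 := by
  simp [hDfun]

lemma hD_continuousOn (hD3 : 3 ≤ D) :
    ContinuousOn (hDfun D) (Set.Ioo (-1 : ℝ) 1) := by
  apply ContinuousOn.sub
  · apply ContinuousOn.rpow_const (by fun_prop)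
    intro x hx
    exact Or.inl (by obtain ⟨_, h⟩ := hx; intro h0; nlinarith [h0])
  · apply ContinuousOn.rpow_const (by fun_prop)
    intro x hx
    exact Or.inl (by obtain ⟨h, _⟩ := hx; intro h0; nlinarith [h0])

lemma hD_ge (hD3 : 3 ≤ D) (u : ℝ) :
    ∃ b ∈ Set.Ioo (-1:ℝ) 1, 0 < b ∧ hDfun D (-b) < u ∧ u < hDfun D b := by
  set δ : ℝ := 1 / (|u| + 2) with hδ
  have hu0 : (0:ℝ) ≤ |u| := abs_nonneg u
  have hδ0 : 0 < δ := by positivity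
  have hδ1 : δ < 1 := by
    rw [hδ, div_lt_one (by linarith)]; linarith
  have h1 : δ ^ (-1 : ℝ) ≤ δ ^ (-(D : ℝ) / ((D : ℝ) - 2)) :=
    Real.rpow_le_rpow_of_exponent_ge hδ0 (le_of_lt hδ1) (expo_le hD3)
  have h3 : δ ^ (-1 : ℝ) = |u| + 2 := by
    rw [Real.rpow_neg_one, hδ]; rw [one_div, inv_inv]
  have habs : u ≤ |u| := le_abs_self u
  have habs2 : -|u| ≤ u := neg_abs_le u
  refine ⟨1 - δ, ⟨by linarith, by linarith⟩, by linarith, ?_, ?_⟩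
  · have h2 : (1 - -(1 - δ)) ^ (-(D : ℝ) / ((D : ℝ) - 2)) ≤ 1 :=
      Real.rpow_le_one_of_one_le_of_nonpos (by linarith) (le_of_lt (expo_neg hD3))
    unfold hDfun
    have heq : (1 + -(1 - δ)) = δ := by ring
    rw [heq]
    linarith
  · have h2 : (1 + (1 - δ)) ^ (-(D : ℝ) / ((D : ℝ) - 2)) ≤ 1 :=
      Real.rpow_le_one_of_one_le_of_nonpos (by linarith) (le_of_lt (expo_neg hD3))
    unfold hDfun
    have heq : (1 - (1 - δ)) = δ := by ring
    rw [heq]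
    linarith

lemma hD_surj (hD3 : 3 ≤ D) (u : ℝ) : ∃ z ∈ Set.Ioo (-1:ℝ) 1, hDfun D z = u := by
  obtain ⟨b, hb, hbpos, hlb, hub⟩ := hD_ge hD3 u
  have hmb : -b ∈ Set.Ioo (-1:ℝ) 1 := ⟨by have := hb.2; linarith, by have := hb.1; linarith⟩
  have hab : -b ≤ b := by linarith
  have hsub : Set.Icc (-b) b ⊆ Set.Ioo (-1:ℝ) 1 := fun x hx =>
    ⟨by have := hx.1; have := hb.2; linarith, by have := hx.2; have := hb.2; linarith⟩
  have hIVT := intermediate_value_Icc hab ((hD_continuousOn hD3).mono hsub)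
  have hu : u ∈ Set.Icc (hDfun D (-b)) (hDfun D b) := ⟨le_of_lt hlb, le_of_lt hub⟩
  obtain ⟨z, hz, hzu⟩ := hIVT hu
  exact ⟨z, hsub hz, hzu⟩

end PartA

section PartA2

variable {D : ℕ}

lemma hDInv_mem (D : ℕ) (u : ℝ) : hDInv D u ∈ Set.Ioo (-1:ℝ) 1 := by
  haveI : Nonempty (Set.Ioo (-1 : ℝ) 1) := ⟨⟨0, by norm_num [Set.mem_Ioo]⟩⟩
  unfold hDInv
  exact (Function.invFun (fun z : Set.Ioo (-1 : ℝ) 1 => hDfun D z.1) u).2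

lemma hD_hDInv (hD3 : 3 ≤ D) (u : ℝ) : hDfun D (hDInv D u) = u := by
  haveI : Nonempty (Set.Ioo (-1 : ℝ) 1) := ⟨⟨0, by norm_num [Set.mem_Ioo]⟩⟩
  obtain ⟨z, hz, hzu⟩ := hD_surj hD3 u
  unfold hDInv
  exact Function.invFun_eq (f := fun z : Set.Ioo (-1 : ℝ) 1 => hDfun D z.1) ⟨⟨z, hz⟩, hzu⟩

lemma hDInv_hD (hD3 : 3 ≤ D) {z : ℝ} (hz : z ∈ Set.Ioo (-1:ℝ) 1) :
    hDInv D (hDfun D z) = z :=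
  (hD_strictMonoOn hD3).injOn (hDInv_mem D _) hz (hD_hDInv hD3 _)

lemma hDInv_zero (hD3 : 3 ≤ D) : hDInv D 0 = 0 := by
  have := hDInv_hD hD3 (show (0:ℝ) ∈ Set.Ioo (-1:ℝ) 1 by norm_num)
  rwa [hDfun_zero] at this

lemma hDInv_strictMono (hD3 : 3 ≤ D) : StrictMono (hDInv D) := by
  intro u v huv
  rcases lt_trichotomy (hDInv D u) (hDInv D v) with h|h|h
  · exact h
  · exfalso
    have : u = v := by
      have := congrArg (hDfun D) h
      rwa [hD_hDInv hD3, hD_hDInv hD3] at this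
    exact absurd this (ne_of_lt huv)
  · exfalso
    have := (hD_strictMonoOn hD3) (hDInv_mem D v) (hDInv_mem D u) h
    rw [hD_hDInv hD3, hD_hDInv hD3] at this
    linarith

lemma hDInv_continuous (hD3 : 3 ≤ D) : Continuous (hDInv D) := by
  haveI : Nonempty (Set.Ioo (-1 : ℝ) 1) := ⟨⟨0, by norm_num⟩⟩
  set f : Set.Ioo (-1:ℝ) 1 → ℝ := fun z => hDfun D z.1 with hf
  have hmono : StrictMono f := fun a b hab =>
    hD_strictMonoOn hD3 a.2 b.2 (by exact_mod_cast hab)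
  have hsurj : Function.Surjective f := by
    intro u
    obtain ⟨z, hz, hzu⟩ := hD_surj hD3 u
    exact ⟨⟨z, hz⟩, hzu⟩
  let e := StrictMono.orderIsoOfSurjective f hmono hsurj
  have key : hDInv D = fun u => ((e.symm u : Set.Ioo (-1:ℝ) 1) : ℝ) := by
    funext u
    have h1 : f (e.symm u) = u := e.apply_symm_apply u
    have h2 : f (Function.invFun f u) = u := Function.invFun_eq (hsurj u)
    have := hmono.injective (h2.trans h1.symm)
    unfold hDInv
    rw [this]
  rw [key]
  exact continuous_subtype_val.comp e.symm.continuous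

lemma hDInv_tendsto_atTop (hD3 : 3 ≤ D) :
    Filter.Tendsto (hDInv D) Filter.atTop (nhds 1) := by
  have hbdd : BddAbove (Set.range (hDInv D)) :=
    ⟨1, fun x ⟨u, hu⟩ => hu ▸ (hDInv_mem D u).2.le⟩
  have h := tendsto_atTop_ciSup (hDInv_strictMono hD3).monotone hbdd
  have hrange : Set.range (hDInv D) = Set.Ioo (-1:ℝ) 1 := by
    apply Set.eq_of_subset_of_subset
    · rintro x ⟨u, rfl⟩; exact hDInv_mem D u
    · intro z hz; exact ⟨hDfun D z, hDInv_hD hD3 hz⟩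
  have : (⨆ u, hDInv D u) = 1 := by
    rw [iSup, hrange, csSup_Ioo (by norm_num)]
  rwa [this] at h

lemma qD_hasDerivAt (hD3 : 3 ≤ D) (u : ℝ) : HasDerivAt (qDfun D) (hDInv D u) u := by
  have := ((hDInv_continuous hD3).integral_hasStrictDerivAt 0 u).hasDerivAt
  exact this

end PartA2



section PartB

/-- kernel direction -/
def nvec (d' : ℕ) (ρ : ℝ) : Fin (d'+3) → ℝ :=
  fun i => if i = 0 then -(ρ*((d':ℝ)+2)) else 1

/-- ground truth -/
def gvec (d' : ℕ) : Fin (d'+3) → ℝ := fun i => if i = 0 then 1 else 0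

def nsq (d' : ℕ) (ρ : ℝ) : ℝ := ∑ j, nvec d' ρ j * nvec d' ρ j

def Amat (d' : ℕ) (ρ : ℝ) : Matrix (Fin (d'+3)) (Fin (d'+3)) ℝ :=
  Matrix.of fun i j => (if i = j then 1 else 0) - nvec d' ρ i * nvec d' ρ j / nsq d' ρ

variable {d' : ℕ} {ρ : ℝ}

lemma sum_split (f : Fin (d'+3) → ℝ) :
    ∑ i, f i = f 0 + ∑ i ∈ Finset.univ.erase 0, f i :=
  (Finset.add_sum_erase _ f (Finset.mem_univ 0)).symm

lemma card_erase_zero : (Finset.univ.erase (0 : Fin (d'+3))).card = d' + 2 := by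
  rw [Finset.card_erase_of_mem (Finset.mem_univ _), Finset.card_univ, Fintype.card_fin]
  omega

lemma sum_erase_const (c : ℝ) (f : Fin (d'+3) → ℝ) (hf : ∀ i, i ≠ 0 → f i = c) :
    ∑ i ∈ Finset.univ.erase 0, f i = ((d':ℝ)+2) * c := by
  rw [Finset.sum_congr rfl (fun i hi => hf i (Finset.ne_of_mem_erase hi)),
    Finset.sum_const, card_erase_zero, nsmul_eq_mul]
  push_cast
  ring

lemma nsq_eq : nsq d' ρ = (ρ*((d':ℝ)+2))^2 + ((d':ℝ)+2) := by
  rw [nsq, sum_split (fun j => nvec d' ρ j * nvec d' ρ j),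
    sum_erase_const 1 _ (fun i hi => by simp [nvec, hi])]
  simp [nvec]
  ring

lemma nsq_pos : 0 < nsq d' ρ := by
  rw [nsq_eq]
  positivity

lemma nvec_ne_zero : nvec d' ρ ≠ 0 := by
  intro h
  have h1 : nvec d' ρ 1 = 0 := by rw [h]; rfl
  simp [nvec] at h1

lemma mulVec_apply (v : Fin (d'+3) → ℝ) (i : Fin (d'+3)) :
    (Amat d' ρ).mulVec v i = v i - nvec d' ρ i * (∑ j, nvec d' ρ j * v j) / nsq d' ρ := by
  rw [Matrix.mulVec, dotProduct]
  have : ∀ j, Amat d' ρ i j * v j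
      = (if i = j then v j else 0) - nvec d' ρ i * (nvec d' ρ j * v j) / nsq d' ρ := by
    intro j
    by_cases h : i = j <;> simp [Amat, h] <;> ring
  rw [Finset.sum_congr rfl (fun j _ => this j), Finset.sum_sub_distrib,
    Finset.sum_ite_eq]
  simp [Finset.mul_sum, Finset.sum_div]

lemma ker_iff (v : Fin (d'+3) → ℝ) :
    (Amat d' ρ).mulVec v = 0 ↔ ∃ t : ℝ, v = t • nvec d' ρ := by
  constructor
  · intro h
    refine ⟨(∑ j, nvec d' ρ j * v j) / nsq d' ρ, ?_⟩
    funext i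
    have := congrFun h i
    rw [mulVec_apply] at this
    simp only [Pi.zero_apply] at this
    simp only [Pi.smul_apply, smul_eq_mul]
    linear_combination this
  · rintro ⟨t, rfl⟩
    funext i
    rw [mulVec_apply]
    have hsum : ∑ j, nvec d' ρ j * (t • nvec d' ρ) j = t * nsq d' ρ := by
      rw [nsq, Finset.mul_sum]
      apply Finset.sum_congr rfl
      intro j _
      simp only [Pi.smul_apply, smul_eq_mul]
      ring
    rw [hsum]
    have := nsq_pos (d' := d') (ρ := ρ)
    simp only [Pi.smul_apply, smul_eq_mul, Pi.zero_apply]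
    field_simp
    ring

lemma feas_iff (x : Fin (d'+3) → ℝ) :
    (Amat d' ρ).mulVec x = (Amat d' ρ).mulVec (gvec d') ↔
      ∃ t : ℝ, x = gvec d' + t • nvec d' ρ := by
  rw [← sub_eq_zero, ← Matrix.mulVec_sub, ker_iff]
  constructor
  · rintro ⟨t, ht⟩; exact ⟨t, by rw [← ht]; abel⟩
  · rintro ⟨t, rfl⟩; exact ⟨t, by abel⟩

lemma suppF_gvec : suppF (gvec d') = {0} := by
  ext i
  simp only [suppF, Finset.mem_filter, Finset.mem_univ, true_and, Finset.mem_singleton]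
  by_cases h : i = 0 <;> simp [gvec, h]

lemma suppF_gvec_compl : (suppF (gvec d'))ᶜ = Finset.univ.erase 0 := by
  rw [suppF_gvec]
  ext i
  simp [Finset.mem_compl, Finset.mem_erase, eq_comm]

lemma card_compl_suppF : ((suppF (gvec d'))ᶜ.card : ℝ) = (d':ℝ) + 2 := by
  rw [suppF_gvec_compl, card_erase_zero]
  push_cast; ring

lemma abs_nvec_zero (hρ0 : 0 ≤ ρ) : |nvec d' ρ 0| = ρ*((d':ℝ)+2) := by
  have : nvec d' ρ 0 = -(ρ*((d':ℝ)+2)) := by simp [nvec]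
  rw [this, abs_neg, abs_of_nonneg (by positivity)]

lemma l1_gvec : l1 (gvec d') = 1 := by
  rw [l1, sum_split (fun i => |gvec d' i|),
    sum_erase_const 0 _ (fun i hi => by simp [gvec, hi])]
  simp [gvec]

lemma l1_smul_nvec (hρ0 : 0 ≤ ρ) (t : ℝ) :
    l1 (fun i => t * nvec d' ρ i) = |t| * (((d':ℝ)+2) * (1+ρ)) := by
  rw [l1, sum_split (fun i => |t * nvec d' ρ i|),
    sum_erase_const |t| _ (fun i hi => by simp [nvec, hi])]
  rw [abs_mul, abs_nvec_zero hρ0]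
  ring

lemma l1_line_lower (hρ0 : 0 ≤ ρ) (t : ℝ) :
    1 + (1-ρ)*(((d':ℝ)+2))*|t| ≤ l1 (gvec d' + t • nvec d' ρ) := by
  rw [l1, sum_split (fun i => |(gvec d' + t • nvec d' ρ) i|),
    sum_erase_const |t| _ (fun i hi => by simp [gvec, nvec, hi])]
  have h0 : (gvec d' + t • nvec d' ρ) 0 = 1 + t * nvec d' ρ 0 := by
    simp [gvec, Pi.add_apply]
  rw [h0]
  have h1 : 1 - |t * nvec d' ρ 0| ≤ |1 + t * nvec d' ρ 0| := by
    have h := abs_add_le (1 + t * nvec d' ρ 0) (-(t * nvec d' ρ 0))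
    rw [add_neg_cancel_right, abs_neg, abs_one] at h
    linarith
  rw [abs_mul, abs_nvec_zero hρ0] at h1
  nlinarith [abs_nonneg t]

lemma sign_gvec_zero : Real.sign (gvec d' 0) = 1 := by
  have : gvec d' 0 = 1 := by simp [gvec]
  rw [this, Real.sign_one]

lemma abs_erase_sum (t : ℝ) :
    ∑ i ∈ Finset.univ.erase (0 : Fin (d'+3)), |t * nvec d' ρ i| = ((d':ℝ)+2) * |t| :=
  sum_erase_const _ _ (fun i hi => by simp [nvec, hi])

lemma rho_eq (hρ0 : 0 ≤ ρ) : rho (Amat d' ρ) (gvec d') = ρ := by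
  have hm : (0:ℝ) < (d':ℝ)+2 := by positivity
  apply IsGreatest.csSup_eq
  constructor
  · refine ⟨nvec d' ρ, (ker_iff _).2 ⟨1, (one_smul ℝ _).symm⟩, nvec_ne_zero, ?_⟩
    rw [suppF_gvec_compl, suppF_gvec, Finset.sum_singleton, sign_gvec_zero]
    have h1 : ∑ i ∈ Finset.univ.erase (0 : Fin (d'+3)), |nvec d' ρ i| = ((d':ℝ)+2) * 1 :=
      sum_erase_const _ _ (fun i hi => by simp [nvec, hi])
    rw [h1]
    have : nvec d' ρ 0 = -(ρ*((d':ℝ)+2)) := by simp [nvec]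
    rw [this]
    field_simp
  · rintro r ⟨nn, hker, hnz, rfl⟩
    rw [ker_iff] at hker
    obtain ⟨t, rfl⟩ := hker
    have ht : t ≠ 0 := by
      rintro rfl
      simp at hnz
    rw [suppF_gvec_compl, suppF_gvec, Finset.sum_singleton, sign_gvec_zero]
    have h1 : ∑ i ∈ Finset.univ.erase (0 : Fin (d'+3)), |(t • nvec d' ρ) i| = ((d':ℝ)+2) * |t| := by
      rw [show (fun i => |(t • nvec d' ρ) i|) = fun i => |t * nvec d' ρ i| from rfl]
      exact abs_erase_sum t
    rw [h1]
    have h2 : (t • nvec d' ρ) 0 = t * -(ρ*((d':ℝ)+2)) := by simp [nvec]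
    rw [h2]
    have htabs : 0 < |t| := abs_pos.2 ht
    rw [div_le_iff₀ (by positivity)]
    have hts : t ≤ |t| := le_abs_self t
    have hkey := mul_le_mul_of_nonneg_left hts (mul_nonneg hρ0 hm.le)
    nlinarith

lemma rhoTilde_eq (hρ0 : 0 ≤ ρ) : rhoTilde (Amat d' ρ) (gvec d') = ρ := by
  have hm : (0:ℝ) < (d':ℝ)+2 := by positivity
  have hval : ∀ nn : Fin (d'+3) → ℝ, (Amat d' ρ).mulVec nn = 0 → nn ≠ 0 →
      (∑ i ∈ suppF (gvec d'), |nn i|) / ∑ i ∈ (suppF (gvec d'))ᶜ, |nn i| = ρ := by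
    intro nn hker hnz
    rw [ker_iff] at hker
    obtain ⟨t, rfl⟩ := hker
    have ht : t ≠ 0 := by rintro rfl; simp at hnz
    have htabs : 0 < |t| := abs_pos.2 ht
    rw [suppF_gvec_compl, suppF_gvec, Finset.sum_singleton]
    have h1 : ∑ i ∈ Finset.univ.erase (0 : Fin (d'+3)), |(t • nvec d' ρ) i| = ((d':ℝ)+2) * |t| :=
      abs_erase_sum t
    rw [h1]
    have h2 : |(t • nvec d' ρ) 0| = |t| * (ρ*((d':ℝ)+2)) := by
      have : (t • nvec d' ρ) 0 = t * nvec d' ρ 0 := rfl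
      rw [this, abs_mul, abs_nvec_zero hρ0]
    rw [h2]
    field_simp
  apply IsGreatest.csSup_eq
  constructor
  · refine ⟨nvec d' ρ, (ker_iff _).2 ⟨1, (one_smul ℝ _).symm⟩, nvec_ne_zero, ?_⟩
    exact (hval _ ((ker_iff _).2 ⟨1, (one_smul ℝ _).symm⟩) nvec_ne_zero).symm
  · rintro r ⟨nn, hker, hnz, rfl⟩
    exact le_of_eq (hval nn hker hnz)

/-- derivative of the potential along the feasible line -/
def Phi (D d' : ℕ) (ρ α : ℝ) : ℝ → ℝ := fun t =>
  nvec d' ρ 0 * hDInv D ((1 + t * nvec d' ρ 0)/α) + ((d':ℝ)+2) * hDInv D (t/α)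

/-- the potential along the feasible line -/
def Psi (D d' : ℕ) (ρ α : ℝ) : ℝ → ℝ := fun t => Qpot D α (gvec d' + t • nvec d' ρ)

variable {D : ℕ} {α : ℝ}

lemma Psi_hasDerivAt (hD3 : 3 ≤ D) (hα : 0 < α) (t : ℝ) :
    HasDerivAt (Psi D d' ρ α) (Phi D d' ρ α t) t := by
  have hα' : α ≠ 0 := ne_of_gt hα
  have term : ∀ i : Fin (d'+3), HasDerivAt
      (fun s => α * qDfun D ((gvec d' i + s * nvec d' ρ i)/α))
      (nvec d' ρ i * hDInv D ((gvec d' i + t * nvec d' ρ i)/α)) t := by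
    intro i
    have h1 : HasDerivAt (fun s : ℝ => gvec d' i + s * nvec d' ρ i) (nvec d' ρ i) t := by
      simpa using (hasDerivAt_mul_const (nvec d' ρ i)).const_add (gvec d' i)
    have hinner := h1.div_const α
    have houter := qD_hasDerivAt hD3 ((gvec d' i + t * nvec d' ρ i)/α)
    have hcomp := (houter.comp t hinner).const_mul α
    refine hcomp.congr_deriv ?_
    field_simp
  have hsum := HasDerivAt.sum (u := Finset.univ) (x := t)
    (A := fun i s => α * qDfun D ((gvec d' i + s * nvec d' ρ i)/α))
    (A' := fun i => nvec d' ρ i * hDInv D ((gvec d' i + t * nvec d' ρ i)/α))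
    (fun i _ => term i)
  have hfun : (fun s => ∑ i, α * qDfun D ((gvec d' i + s * nvec d' ρ i)/α))
      = Psi D d' ρ α := by
    funext s
    rw [Psi, Qpot]
    exact Finset.sum_congr rfl (fun i _ => by simp [Pi.add_apply])
  have hval : ∑ i, nvec d' ρ i * hDInv D ((gvec d' i + t * nvec d' ρ i)/α)
      = Phi D d' ρ α t := by
    rw [sum_split (fun i => nvec d' ρ i * hDInv D ((gvec d' i + t * nvec d' ρ i)/α)),
      sum_erase_const (hDInv D (t/α)) _ (fun i hi => by simp [nvec, gvec, hi])]
    have hg0 : gvec d' 0 = 1 := by simp [gvec]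
    rw [Phi, hg0]
  rw [Finset.sum_fn, hfun, hval] at hsum
  exact hsum

lemma nvec_zero_nonpos (hρ0 : 0 ≤ ρ) : nvec d' ρ 0 ≤ 0 := by
  have : nvec d' ρ 0 = -(ρ*((d':ℝ)+2)) := by simp [nvec]
  rw [this]
  have : (0:ℝ) ≤ ρ*((d':ℝ)+2) := by positivity
  linarith

lemma Phi_strictMono (hD3 : 3 ≤ D) (hρ0 : 0 ≤ ρ) (hα : 0 < α) :
    StrictMono (Phi D d' ρ α) := by
  intro a b hab
  have hm : (0:ℝ) < (d':ℝ)+2 := by positivity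
  have hn0 : nvec d' ρ 0 ≤ 0 := nvec_zero_nonpos hρ0
  have hdiv : a / α < b / α := by gcongr
  have h2 : hDInv D (a/α) < hDInv D (b/α) := hDInv_strictMono hD3 hdiv
  have hba : b * nvec d' ρ 0 ≤ a * nvec d' ρ 0 := mul_le_mul_of_nonpos_right hab.le hn0
  have hdiv2 : (1 + b * nvec d' ρ 0)/α ≤ (1 + a * nvec d' ρ 0)/α := by
    gcongr
  have h1 : nvec d' ρ 0 * hDInv D ((1 + a * nvec d' ρ 0)/α)
      ≤ nvec d' ρ 0 * hDInv D ((1 + b * nvec d' ρ 0)/α) :=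
    mul_le_mul_of_nonpos_left ((hDInv_strictMono hD3).monotone hdiv2) hn0
  have h3 := mul_lt_mul_of_pos_left h2 hm
  simp only [Phi]
  linarith

lemma Phi_continuous (hD3 : 3 ≤ D) (hα : 0 < α) : Continuous (Phi D d' ρ α) := by
  apply Continuous.add
  · exact continuous_const.mul ((hDInv_continuous hD3).comp
      ((continuous_const.add (continuous_id.mul continuous_const)).div_const α))
  · exact continuous_const.mul ((hDInv_continuous hD3).comp (continuous_id.div_const α))

lemma Phi_zero_exists (hD3 : 3 ≤ D) (hρ0 : 0 ≤ ρ) (hρ1 : ρ < 1) (hα : 0 < α) :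
    ∃ t0, Phi D d' ρ α t0 = 0 := by
  have hα' : α ≠ 0 := ne_of_gt hα
  have hm : (0:ℝ) < (d':ℝ)+2 := by positivity
  have hn0 : nvec d' ρ 0 ≤ 0 := nvec_zero_nonpos hρ0
  have hn0' : nvec d' ρ 0 = -(ρ*((d':ℝ)+2)) := by simp [nvec]
  set z : ℝ := (ρ+1)/2 with hz
  have hzIoo : z ∈ Set.Ioo (-1:ℝ) 1 := ⟨by rw [hz]; linarith, by rw [hz]; linarith⟩
  have hzIoo' : -z ∈ Set.Ioo (-1:ℝ) 1 := ⟨by rw [hz]; linarith, by rw [hz]; linarith⟩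
  have hzρ : ρ < z := by rw [hz]; linarith
  set b : ℝ := α * hDfun D z with hb
  set a : ℝ := α * hDfun D (-z) with ha
  have hab : a < b := by
    rw [ha, hb]
    have : hDfun D (-z) < hDfun D z :=
      hD_strictMonoOn hD3 hzIoo' hzIoo (by rw [hz]; linarith)
    exact mul_lt_mul_of_pos_left this hα
  have hΦb : 0 < Phi D d' ρ α b := by
    have hba : b / α = hDfun D z := by rw [hb]; field_simp
    have h1 : hDInv D (b/α) = z := by rw [hba, hDInv_hD hD3 hzIoo]
    have hQ := hDInv_mem D ((1 + b * nvec d' ρ 0)/α)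
    have h2 : nvec d' ρ 0 * 1 ≤ nvec d' ρ 0 * hDInv D ((1 + b * nvec d' ρ 0)/α) :=
      mul_le_mul_of_nonpos_left hQ.2.le hn0
    simp only [Phi]
    rw [h1]
    nlinarith
  have hΦa : Phi D d' ρ α a < 0 := by
    have haa : a / α = hDfun D (-z) := by rw [ha]; field_simp
    have h1 : hDInv D (a/α) = -z := by rw [haa, hDInv_hD hD3 hzIoo']
    have hQ := hDInv_mem D ((1 + a * nvec d' ρ 0)/α)
    have h2 : nvec d' ρ 0 * hDInv D ((1 + a * nvec d' ρ 0)/α) ≤ nvec d' ρ 0 * (-1) :=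
      mul_le_mul_of_nonpos_left hQ.1.le hn0
    simp only [Phi]
    rw [h1]
    nlinarith
  have hIVT := intermediate_value_Icc (f := Phi D d' ρ α) hab.le
    (Phi_continuous (d' := d') (ρ := ρ) hD3 hα).continuousOn
  have h0mem : (0:ℝ) ∈ Set.Icc (Phi D d' ρ α a) (Phi D d' ρ α b) := ⟨hΦa.le, hΦb.le⟩
  obtain ⟨t0, _, ht0⟩ := hIVT h0mem
  exact ⟨t0, ht0⟩

lemma Psi_continuous (hD3 : 3 ≤ D) (hα : 0 < α) : Continuous (Psi D d' ρ α) :=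
  continuous_iff_continuousAt.2 fun t => (Psi_hasDerivAt hD3 hα t).continuousAt

lemma Psi_min_of_Phi_zero (hD3 : 3 ≤ D) (hρ0 : 0 ≤ ρ) (hα : 0 < α) {t0 : ℝ}
    (h0 : Phi D d' ρ α t0 = 0) :
    ∀ t, t ≠ t0 → Psi D d' ρ α t0 < Psi D d' ρ α t := by
  intro t ht
  rcases lt_or_gt_of_ne ht with hlt | hgt
  · have hanti : StrictAntiOn (Psi D d' ρ α) (Set.Icc t t0) := by
      apply strictAntiOn_of_deriv_neg (convex_Icc t t0)
        (Psi_continuous hD3 hα).continuousOn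
      intro x hx
      rw [interior_Icc] at hx
      rw [(Psi_hasDerivAt hD3 hα x).deriv]
      have := Phi_strictMono (d' := d') (ρ := ρ) hD3 hρ0 hα (a := x) (b := t0) hx.2
      linarith [h0 ▸ this]
    exact hanti (Set.left_mem_Icc.2 hlt.le) (Set.right_mem_Icc.2 hlt.le) hlt
  · have hmono : StrictMonoOn (Psi D d' ρ α) (Set.Icc t0 t) := by
      apply strictMonoOn_of_deriv_pos (convex_Icc t0 t)
        (Psi_continuous hD3 hα).continuousOn
      intro x hx
      rw [interior_Icc] at hx
      rw [(Psi_hasDerivAt hD3 hα x).deriv]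
      have := Phi_strictMono (d' := d') (ρ := ρ) hD3 hρ0 hα (a := t0) (b := x) hx.1
      linarith [h0 ▸ this]
    exact hmono (Set.left_mem_Icc.2 hgt.le) (Set.right_mem_Icc.2 hgt.le) hgt

lemma Psi_critical (hD3 : 3 ≤ D) (hα : 0 < α) {t' : ℝ}
    (hmin : ∀ t, Psi D d' ρ α t' ≤ Psi D d' ρ α t) : Phi D d' ρ α t' = 0 := by
  have hl : IsLocalMin (Psi D d' ρ α) t' := Filter.Eventually.of_forall hmin
  have := hl.deriv_eq_zero
  rwa [(Psi_hasDerivAt hD3 hα t').deriv] at this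

lemma T_tendsto (hD3 : 3 ≤ D) (hρ0 : 0 ≤ ρ) (hρ1 : ρ < 1) (T : ℝ → ℝ)
    (hT : ∀ α : ℝ, 0 < α → Phi D d' ρ α (T α) = 0) :
    Filter.Tendsto (fun α => T α / α) (nhdsWithin 0 (Set.Ioi 0)) (nhds (hDfun D ρ)) := by
  have hm : (0:ℝ) < (d':ℝ)+2 := by positivity
  have hn0' : nvec d' ρ 0 = -(ρ*((d':ℝ)+2)) := by simp [nvec]
  have hρIoo : ρ ∈ Set.Ioo (-1:ℝ) 1 := ⟨by linarith, hρ1⟩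
  have main : ∀ u : ℝ,
      Filter.Tendsto (fun α => Phi D d' ρ α (α * u)) (nhdsWithin 0 (Set.Ioi 0))
        (nhds (((d':ℝ)+2) * (hDInv D u - ρ))) := by
    intro u
    have h1 : Filter.Tendsto (fun α : ℝ => 1/α + u * nvec d' ρ 0)
        (nhdsWithin 0 (Set.Ioi 0)) Filter.atTop := by
      have h0 := tendsto_inv_nhdsGT_zero (𝕜 := ℝ)
      have := Filter.tendsto_atTop_add_const_right _ (u * nvec d' ρ 0) h0
      simpa [one_div] using this
    have h2 := (hDInv_tendsto_atTop hD3).comp h1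
    have h3 : Filter.Tendsto
        (fun α : ℝ => nvec d' ρ 0 * hDInv D (1/α + u * nvec d' ρ 0) + ((d':ℝ)+2) * hDInv D u)
        (nhdsWithin 0 (Set.Ioi 0)) (nhds (nvec d' ρ 0 * 1 + ((d':ℝ)+2) * hDInv D u)) :=
      (h2.const_mul _).add tendsto_const_nhds
    have heq : ∀ᶠ α in nhdsWithin (0:ℝ) (Set.Ioi 0),
        nvec d' ρ 0 * hDInv D (1/α + u * nvec d' ρ 0) + ((d':ℝ)+2) * hDInv D u
          = Phi D d' ρ α (α * u) := by
      filter_upwards [self_mem_nhdsWithin] with α hα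
      have hα0 : (0:ℝ) < α := hα
      have hα' : α ≠ 0 := ne_of_gt hα0
      simp only [Phi]
      rw [show (1 + α * u * nvec d' ρ 0)/α = 1/α + u * nvec d' ρ 0 by field_simp]
      rw [mul_div_cancel_left₀ _ hα']
    have hlim := Filter.Tendsto.congr' heq h3
    have hval : nvec d' ρ 0 * 1 + ((d':ℝ)+2) * hDInv D u = ((d':ℝ)+2) * (hDInv D u - ρ) := by
      rw [hn0']; ring
    rwa [hval] at hlim
  rw [Metric.tendsto_nhds]
  intro ε hε
  have hu1 : ρ < hDInv D (hDfun D ρ + ε) := by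
    have := hDInv_strictMono hD3 (lt_add_of_pos_right (hDfun D ρ) hε)
    rwa [hDInv_hD hD3 hρIoo] at this
  have hu2 : hDInv D (hDfun D ρ - ε) < ρ := by
    have := hDInv_strictMono hD3 (sub_lt_self (hDfun D ρ) hε)
    rwa [hDInv_hD hD3 hρIoo] at this
  have hpos : ∀ᶠ α in nhdsWithin (0:ℝ) (Set.Ioi 0),
      0 < Phi D d' ρ α (α * (hDfun D ρ + ε)) :=
    (main _).eventually (eventually_gt_nhds (by nlinarith))
  have hneg : ∀ᶠ α in nhdsWithin (0:ℝ) (Set.Ioi 0),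
      Phi D d' ρ α (α * (hDfun D ρ - ε)) < 0 :=
    (main _).eventually (eventually_lt_nhds (by nlinarith))
  filter_upwards [hpos, hneg, self_mem_nhdsWithin] with α hp hn hα
  have hα0 : (0:ℝ) < α := hα
  have hup : T α < α * (hDfun D ρ + ε) := by
    by_contra h
    push_neg at h
    have := (Phi_strictMono (d' := d') (ρ := ρ) hD3 hρ0 hα0).monotone h
    rw [hT α hα0] at this
    linarith
  have hdown : α * (hDfun D ρ - ε) < T α := by
    by_contra h
    push_neg at h
    have := (Phi_strictMono (d' := d') (ρ := ρ) hD3 hρ0 hα0).monotone h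
    rw [hT α hα0] at this
    linarith
  have e1 : hDfun D ρ - ε < T α / α := by
    rw [lt_div_iff₀ hα0]
    nlinarith
  have e2 : T α / α < hDfun D ρ + ε := by
    rw [div_lt_iff₀ hα0]
    nlinarith
  rw [Real.dist_eq, abs_lt]
  constructor <;> linarith

lemma DQ_zero_eq {dd : ℕ} (hD3 : 3 ≤ D) (α : ℝ) (x : Fin dd → ℝ) :
    DQ D α x (0 : Fin dd → ℝ) = Qpot D α x - Qpot D α (0 : Fin dd → ℝ) := by
  simp [DQ, hDInv_zero hD3]

lemma DQ_le_iff {dd : ℕ} (hD3 : 3 ≤ D) (α : ℝ) (x z : Fin dd → ℝ) :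
    DQ D α x 0 ≤ DQ D α z 0 ↔ Qpot D α x ≤ Qpot D α z := by
  rw [DQ_zero_eq hD3 α x, DQ_zero_eq hD3 α z]
  constructor <;> intro <;> linarith

lemma coeff_eq (t : ℝ) :
    (∑ j, nvec d' ρ j * (t • nvec d' ρ) j) / nsq d' ρ = t := by
  have hsum : ∑ j, nvec d' ρ j * (t • nvec d' ρ) j = t * nsq d' ρ := by
    rw [nsq, Finset.mul_sum]
    apply Finset.sum_congr rfl
    intro j _
    simp only [Pi.smul_apply, smul_eq_mul]
    ring
  rw [hsum]
  field_simp [ne_of_gt (nsq_pos (d' := d') (ρ := ρ))]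

lemma param_inj {t s : ℝ} (h : gvec d' + t • nvec d' ρ = gvec d' + s • nvec d' ρ) : t = s := by
  have h1 := congrFun h 1
  simp only [Pi.add_apply, Pi.smul_apply, smul_eq_mul] at h1
  simp [nvec] at h1
  exact h1

lemma linfty_compl (t : ℝ) :
    linftyOn (suppF (gvec d'))ᶜ (fun i => t * nvec d' ρ i) = |t| := by
  rw [linftyOn]
  have hset : { r | ∃ i ∈ (suppF (gvec d'))ᶜ, r = |t * nvec d' ρ i| } = {|t|} := by
    ext r
    simp only [Set.mem_setOf_eq, Set.mem_singleton_iff, suppF_gvec_compl]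
    constructor
    · rintro ⟨i, hi, rfl⟩
      have : i ≠ 0 := Finset.ne_of_mem_erase hi
      simp [nvec, this]
    · rintro rfl
      refine ⟨1, ?_, by simp [nvec]⟩
      simp [Finset.mem_erase]
  rw [hset, csSup_singleton]

lemma hD_nonneg (hD3 : 3 ≤ D) (hρ0 : 0 ≤ ρ) (hρ1 : ρ < 1) : 0 ≤ hDfun D ρ := by
  rcases eq_or_lt_of_le hρ0 with h | h
  · rw [← h, hDfun_zero]
  · have := hD_strictMonoOn hD3 (show (0:ℝ) ∈ Set.Ioo (-1:ℝ) 1 by norm_num)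
      ⟨by linarith, hρ1⟩ h
    rw [hDfun_zero] at this
    linarith

end PartB


/-- asymptotic sharpness of the bounds in the deep case D ≥ 3. -/
theorem deep_sharpness (d D : ℕ) (hd : 3 ≤ d) (hD3 : 3 ≤ D)
    (ρ : ℝ) (hρ0 : 0 ≤ ρ) (hρ1 : ρ < 1) :
    ∃ (N : ℕ) (A : Matrix (Fin N) (Fin d) ℝ) (y : Fin N → ℝ) (g : Fin d → ℝ),
      A.mulVec g = y ∧
      (∀ x : Fin d → ℝ, A.mulVec x = y → l1 g ≤ l1 x) ∧
      (∀ x : Fin d → ℝ, A.mulVec x = y → l1 x = l1 g → x = g) ∧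
      rho A g = ρ ∧
      (∀ α : ℝ, 0 < α → ∃! x : Fin d → ℝ,
        A.mulVec x = y ∧ ∀ z : Fin d → ℝ, A.mulVec z = y → DQ D α x 0 ≤ DQ D α z 0) ∧
      (∀ xinf : ℝ → Fin d → ℝ,
        (∀ α : ℝ, 0 < α → A.mulVec (xinf α) = y ∧
          ∀ z : Fin d → ℝ, A.mulVec z = y → DQ D α (xinf α) 0 ≤ DQ D α z 0) →
        Filter.Tendsto
          (fun α : ℝ => l1 (fun i => xinf α i - g i) /
            (α * ((suppF g)ᶜ.card : ℝ) * (1 + rhoTilde A g)))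
          (nhdsWithin (0 : ℝ) (Set.Ioi 0)) (nhds (hDfun D ρ)) ∧
        Filter.Tendsto
          (fun α : ℝ => linftyOn ((suppF g)ᶜ) (fun i => xinf α i - g i) / α)
          (nhdsWithin (0 : ℝ) (Set.Ioi 0)) (nhds (hDfun D ρ))) := by
  obtain ⟨d', rfl⟩ : ∃ d', d = d' + 3 := ⟨d - 3, by omega⟩
  have hm : (0:ℝ) < (d':ℝ)+2 := by positivity
  refine ⟨d' + 3, Amat d' ρ, (Amat d' ρ).mulVec (gvec d'), gvec d', rfl, ?_, ?_, ?_, ?_, ?_⟩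
  · -- minimality of the ℓ¹ norm
    intro x hx
    rw [feas_iff] at hx
    obtain ⟨t, rfl⟩ := hx
    have h := l1_line_lower (d' := d') hρ0 t
    rw [l1_gvec]
    have hnn : 0 ≤ (1 - ρ) * ((d':ℝ)+2) * |t| :=
      mul_nonneg (mul_nonneg (by linarith) hm.le) (abs_nonneg t)
    linarith
  · -- uniqueness of the ℓ¹ minimizer
    intro x hx heq
    rw [feas_iff] at hx
    obtain ⟨t, rfl⟩ := hx
    have h := l1_line_lower (d' := d') hρ0 t
    rw [heq, l1_gvec] at h
    have ht : t = 0 := by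
      by_contra hne
      have habs : 0 < |t| := abs_pos.2 hne
      have : 0 < (1 - ρ) * ((d':ℝ)+2) * |t| :=
        mul_pos (mul_pos (by linarith) hm) habs
      linarith
    subst ht
    simp
  · exact rho_eq hρ0
  · -- existence and uniqueness of the Bregman minimizer
    intro α hα
    obtain ⟨t0, ht0⟩ := Phi_zero_exists (d' := d') hD3 hρ0 hρ1 hα
    refine ⟨gvec d' + t0 • nvec d' ρ, ⟨(feas_iff _).2 ⟨t0, rfl⟩, ?_⟩, ?_⟩
    · intro z hz
      rw [feas_iff] at hz
      obtain ⟨s, rfl⟩ := hz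
      rw [DQ_le_iff hD3]
      rcases eq_or_ne s t0 with rfl | hs
      · exact le_rfl
      · exact (Psi_min_of_Phi_zero hD3 hρ0 hα ht0 s hs).le
    · rintro x' ⟨hx'feas, hx'min⟩
      rw [feas_iff] at hx'feas
      obtain ⟨t', rfl⟩ := hx'feas
      suffices ht' : t' = t0 by rw [ht']
      have hmin : ∀ s, Psi D d' ρ α t' ≤ Psi D d' ρ α s := by
        intro s
        have := hx'min (gvec d' + s • nvec d' ρ) ((feas_iff _).2 ⟨s, rfl⟩)
        rwa [DQ_le_iff hD3] at this
      have hcrit := Psi_critical hD3 hα hmin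
      exact (Phi_strictMono (d' := d') (ρ := ρ) hD3 hρ0 hα).injective (hcrit.trans ht0.symm)
  · -- the limits
    intro xinf H
    set T : ℝ → ℝ := fun α => (∑ j, nvec d' ρ j * (xinf α j - gvec d' j)) / nsq d' ρ with hT
    have hrepr : ∀ α : ℝ, 0 < α → xinf α = gvec d' + T α • nvec d' ρ := by
      intro α hα
      obtain ⟨t, ht⟩ := (feas_iff (xinf α)).1 (H α hα).1
      have : T α = t := by
        rw [hT]
        simp only [ht]
        have : ∀ j, gvec d' j + (t • nvec d' ρ) j - gvec d' j = (t • nvec d' ρ) j := by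
          intro j; ring
        simp only [Pi.add_apply]
        rw [show (fun j => nvec d' ρ j * (gvec d' j + (t • nvec d' ρ) j - gvec d' j))
            = fun j => nvec d' ρ j * (t • nvec d' ρ) j from funext fun j => by rw [this j]]
        exact coeff_eq t
      rw [this, ← ht]
    have hPhiT : ∀ α : ℝ, 0 < α → Phi D d' ρ α (T α) = 0 := by
      intro α hα
      apply Psi_critical hD3 hα
      intro s
      have := (H α hα).2 (gvec d' + s • nvec d' ρ) ((feas_iff _).2 ⟨s, rfl⟩)
      rw [hrepr α hα] at this
      rwa [DQ_le_iff hD3] at this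
    have htend := T_tendsto (d' := d') hD3 hρ0 hρ1 T hPhiT
    have htabs : Filter.Tendsto (fun α => |T α / α|) (nhdsWithin 0 (Set.Ioi 0))
        (nhds (hDfun D ρ)) := by
      have := htend.abs
      rwa [abs_of_nonneg (hD_nonneg hD3 hρ0 hρ1)] at this
    have hdiff : ∀ α : ℝ, 0 < α → ∀ i, xinf α i - gvec d' i = T α * nvec d' ρ i := by
      intro α hα i
      rw [hrepr α hα]
      simp [Pi.add_apply]
    constructor
    · apply htabs.congr'
      filter_upwards [self_mem_nhdsWithin] with α hα
      have hα0 : (0:ℝ) < α := hα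
      have h1 : l1 (fun i => xinf α i - gvec d' i) = |T α| * (((d':ℝ)+2) * (1+ρ)) := by
        rw [show (fun i => xinf α i - gvec d' i) = fun i => T α * nvec d' ρ i from
          funext fun i => hdiff α hα0 i]
        exact l1_smul_nvec hρ0 (T α)
      rw [h1, card_compl_suppF, rhoTilde_eq hρ0]
      rw [abs_div, abs_of_pos hα0]
      have h2 : (1:ℝ) + ρ > 0 := by linarith
      field_simp
    · apply htabs.congr'
      filter_upwards [self_mem_nhdsWithin] with α hα
      have hα0 : (0:ℝ) < α := hα
      have h1 : linftyOn (suppF (gvec d'))ᶜ (fun i => xinf α i - gvec d' i) = |T α| := by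
        rw [show (fun i => xinf α i - gvec d' i) = fun i => T α * nvec d' ρ i from
          funext fun i => hdiff α hα0 i]
        exact linfty_compl (T α)
      rw [h1, abs_div, abs_of_pos hα0]
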